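/- Let H be an RKHS over ℝⁿ of C¹ functions, a ∈ ℝ, and γ : [0,T] → ℝⁿ a trajectory with γ̇ = f(γ). Then Γ_γ ∈ D(A_{f,a}*) and A_{f,a}* Γ_γ = K(·, aγ(T)) − K(·, aγ(0)), where A_{f,a} g(x) = a ∇g(ax) · f(x) is the scaled Liouville operator. -/
import Mathlib


open RealInnerProductSpace

/-- The occupation kernel `Γγ` of a trajectory `γ` of `ẋ = f(x)` lies in the
domain of the adjoint of the scaled Liouville operator
`A_{f,a} g (x) = a ∇g(ax) · f(x)`, with `A_{f,a}* Γγ = K(·, aγ(T)) − K(·, aγ(0))`.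
The RKHS of C¹ functions on `ℝⁿ` is modeled by kernel vectors `k`
(so `g(x) = ⟪g, k x⟫`), each `g ∈ H` having gradient `grad g`.  Membership of
`Γγ` in `D(A_{f,a}*)` and the adjoint formula are expressed as: for every `g`
in the domain of `A_{f,a}` (witnessed by `h = A_{f,a} g ∈ H`),
`⟪A_{f,a} g, Γγ⟫ = ⟪g, k (a γ(T)) − k (a γ(0))⟫`. -/
theorem stmt_7 {n : ℕ} {H : Type*} [NormedAddCommGroup H] [InnerProductSpace ℝ H]
    (k : EuclideanSpace ℝ (Fin n) → H)
    (grad : H → EuclideanSpace ℝ (Fin n) → EuclideanSpace ℝ (Fin n))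
    (hgrad : ∀ (g : H), ∀ x, HasGradientAt (fun y => ⟪g, k y⟫) (grad g x) x)
    (a : ℝ)
    (f : EuclideanSpace ℝ (Fin n) → EuclideanSpace ℝ (Fin n))
    (γ : ℝ → EuclideanSpace ℝ (Fin n)) (T : ℝ) (hT : 0 ≤ T)
    (hγ : ∀ t ∈ Set.Icc (0:ℝ) T, HasDerivAt γ (f (γ t)) t)
    (Γγ : H) (hΓ : ∀ g : H, ⟪g, Γγ⟫ = ∫ t in (0:ℝ)..T, ⟪g, k (γ t)⟫) :
    ∀ g h : H, (∀ x, ⟪h, k x⟫ = a * ⟪grad g (a • x), f x⟫) →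
      ⟪h, Γγ⟫ = ⟪g, k (a • γ T) - k (a • γ 0)⟫ := by
  intro g h hh
  have hIcc : Set.uIcc (0:ℝ) T = Set.Icc 0 T := Set.uIcc_of_le hT
  -- derivative of t ↦ ⟪g, k (a • γ t)⟫ is ⟪h, k (γ t)⟫
  have hderiv : ∀ t ∈ Set.uIcc (0:ℝ) T,
      HasDerivAt (fun t => ⟪g, k (a • γ t)⟫) ⟪h, k (γ t)⟫ t := by
    intro t ht
    rw [hIcc] at ht
    have h1 : HasDerivAt (fun t => a • γ t) (a • f (γ t)) t := (hγ t ht).const_smul a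
    have h2 := ((hgrad g (a • γ t)).hasFDerivAt.comp_hasDerivAt t h1)
    have : (InnerProductSpace.toDual ℝ (EuclideanSpace ℝ (Fin n)) (grad g (a • γ t)))
        (a • f (γ t)) = ⟪h, k (γ t)⟫ := by
      simp [InnerProductSpace.toDual_apply_apply, real_inner_smul_right, hh (γ t)]
    rwa [this] at h2
  -- continuity of the integrand
  have hcγ : ContinuousOn γ (Set.Icc 0 T) := fun t ht =>
    (hγ t ht).continuousAt.continuousWithinAt
  have hck : Continuous (fun x => ⟪h, k x⟫) := by
    have : Differentiable ℝ (fun x => ⟪h, k x⟫) :=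
      fun x => (hgrad h x).differentiableAt
    exact this.continuous
  have hint : IntervalIntegrable (fun t => ⟪h, k (γ t)⟫) MeasureTheory.volume 0 T := by
    apply ContinuousOn.intervalIntegrable
    rw [hIcc]
    exact hck.comp_continuousOn hcγ
  have hFTC := intervalIntegral.integral_eq_sub_of_hasDerivAt hderiv hint
  rw [hΓ h, hFTC, inner_sub_right]
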